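/- Let T be the set of vectors of norm 3 (i.e., ⟨x,x⟩ = 3) in the lattice A₁₅⁺ generated by A₁₅ = {x ∈ ℤ^{16} : ∑xᵢ = 0} and the vector [4] = (1/4)𝟙 − e₁₃ − e₁₄ − e₁₅ − e₁₆. Then T = {±t_I : I ⊆ {1,…,16}, |I| = 4}, where t_I = (1/4)𝟙 − ∑_{i∈I} eᵢ. -/

import Mathlib

open scoped RealInnerProductSpace

/-- `t_I = (1/4)·𝟙 − ∑_{i ∈ I} e_i ∈ ℝ^16`. -/
noncomputable def tVec (I : Finset (Fin 16)) : EuclideanSpace ℝ (Fin 16) :=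
  WithLp.toLp 2 (fun j => 1 / 4 - if j ∈ I then 1 else 0)

/-- The lattice `A₁₅⁺`: the ℤ-span of `A₁₅ = {x ∈ ℤ^16 : ∑ xᵢ = 0}` and the glue
vector `[4] = (1/4)𝟙 − e₁₃ − e₁₄ − e₁₅ − e₁₆ = t_{13,14,15,16}`. -/
noncomputable def A15plus : Submodule ℤ (EuclideanSpace ℝ (Fin 16)) :=
  Submodule.span ℤ
    ({x : EuclideanSpace ℝ (Fin 16) | (∀ i, ∃ k : ℤ, x i = (k : ℝ)) ∧ ∑ i, x i = 0}
      ∪ {tVec {12, 13, 14, 15}})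

lemma tVec_apply (I : Finset (Fin 16)) (j : Fin 16) :
    tVec I j = 1 / 4 - if j ∈ I then 1 else 0 := rfl

lemma sum_tVec (I : Finset (Fin 16)) : ∑ j, tVec I j = 4 - I.card := by
  simp only [tVec_apply]
  rw [Finset.sum_sub_distrib, Finset.sum_const, Finset.sum_ite_mem, Finset.univ_inter,
    Finset.sum_const]
  simp
  norm_num

lemma aux_nonneg (n : ℤ) : 0 ≤ n^2 + n := by
  rcases le_or_gt 0 n with h | h
  · nlinarith
  · have h1 : n ≤ -1 := by omega
    nlinarith

noncomputable def Mlat : Submodule ℤ (EuclideanSpace ℝ (Fin 16)) where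
  carrier := {x | (∃ k : ℤ, ∀ i, ∃ c : ℤ, x i = c + k / 4) ∧ ∑ i, x i = 0}
  zero_mem' := ⟨⟨0, fun i => ⟨0, by simp⟩⟩, by simp⟩
  add_mem' := by
    rintro x y ⟨⟨kx, hkx⟩, hsx⟩ ⟨⟨ky, hky⟩, hsy⟩
    refine ⟨⟨kx + ky, fun i => ?_⟩, ?_⟩
    · obtain ⟨cx, hcx⟩ := hkx i
      obtain ⟨cy, hcy⟩ := hky i
      exact ⟨cx + cy, by simp only [PiLp.add_apply, hcx, hcy]; push_cast; ring⟩
    · simp only [PiLp.add_apply, Finset.sum_add_distrib, hsx, hsy, add_zero]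
  smul_mem' := by
    rintro n x ⟨⟨k, hk⟩, hs⟩
    refine ⟨⟨n * k, fun i => ?_⟩, ?_⟩
    · obtain ⟨c, hc⟩ := hk i
      refine ⟨n * c, ?_⟩
      simp only [PiLp.smul_apply, hc, zsmul_eq_mul]
      push_cast; ring
    · simp only [PiLp.smul_apply, zsmul_eq_mul, ← Finset.mul_sum, hs, mul_zero]

lemma mem_A15plus_iff (x : EuclideanSpace ℝ (Fin 16)) :
    x ∈ A15plus ↔ (∃ k : ℤ, ∀ i, ∃ c : ℤ, x i = c + k / 4) ∧ ∑ i, x i = 0 := by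
  constructor
  · intro hx
    have hle : A15plus ≤ Mlat := by
      rw [A15plus, Submodule.span_le]
      rintro y (⟨hy1, hy2⟩ | hy)
      · exact ⟨⟨0, fun i => by obtain ⟨k, hk⟩ := hy1 i; exact ⟨k, by simp [hk]⟩⟩, hy2⟩
      · simp only [Set.mem_singleton_iff] at hy
        subst hy
        refine ⟨⟨1, fun i => ⟨-(if i ∈ ({12,13,14,15} : Finset (Fin 16)) then 1 else 0),
          ?_⟩⟩, ?_⟩
        · rw [tVec_apply]; push_cast; split <;> norm_num
        · rw [sum_tVec]; norm_num [show (({12,13,14,15} : Finset (Fin 16))).card = 4 by decide]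
    exact hle hx
  · rintro ⟨⟨k, hk⟩, hs⟩
    choose c hc using hk
    have hmem : x - k • tVec {12,13,14,15} ∈
        ({y : EuclideanSpace ℝ (Fin 16) | (∀ i, ∃ m : ℤ, y i = (m : ℝ)) ∧ ∑ i, y i = 0}
          ∪ {tVec {12,13,14,15}}) := by
      left
      constructor
      · intro i
        refine ⟨c i + k * (if i ∈ ({12,13,14,15} : Finset (Fin 16)) then 1 else 0), ?_⟩
        simp only [PiLp.sub_apply, PiLp.smul_apply, zsmul_eq_mul, hc i, tVec_apply]
        push_cast
        split <;> ring
      · simp only [PiLp.sub_apply, PiLp.smul_apply, zsmul_eq_mul, Finset.sum_sub_distrib,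
          ← Finset.mul_sum, hs, sum_tVec]
        norm_num [show (({12,13,14,15} : Finset (Fin 16))).card = 4 by decide]
    have h1 : x - k • tVec {12,13,14,15} ∈ A15plus := Submodule.subset_span hmem
    have h2 : (k : ℤ) • tVec {12,13,14,15} ∈ A15plus :=
      Submodule.smul_mem _ _ (Submodule.subset_span (Or.inr rfl))
    have := Submodule.add_mem _ h1 h2
    simpa using this

lemma inner_tVec (I : Finset (Fin 16)) (h : I.card = 4) :
    ⟪tVec I, tVec I⟫ = (3 : ℝ) := by
  rw [PiLp.inner_apply]
  simp only [RCLike.inner_apply]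
  have : ∀ j, tVec I j * (starRingEnd ℝ) (tVec I j)
      = 1/16 + if j ∈ I then (1/2 : ℝ) else 0 := by
    intro j
    simp only [starRingEnd_apply, star_trivial, tVec_apply]
    split <;> norm_num
  rw [Finset.sum_congr rfl (fun j _ => this j), Finset.sum_add_distrib, Finset.sum_const,
    Finset.sum_ite_mem, Finset.univ_inter, Finset.sum_const, h]
  norm_num

lemma tVec_mem (I : Finset (Fin 16)) (h : I.card = 4) : tVec I ∈ A15plus := by
  rw [mem_A15plus_iff]
  refine ⟨⟨1, fun i => ⟨-(if i ∈ I then 1 else 0), ?_⟩⟩, ?_⟩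
  · rw [tVec_apply]; push_cast; split <;> norm_num
  · rw [sum_tVec, h]; norm_num

/-- The set of norm-3 vectors of `A₁₅⁺` is exactly `{±t_I : |I| = 4}`. -/
theorem stmt_10 (x : EuclideanSpace ℝ (Fin 16)) :
    (x ∈ A15plus ∧ ⟪x, x⟫ = 3) ↔
      ∃ I : Finset (Fin 16), I.card = 4 ∧ (x = tVec I ∨ x = -tVec I) := by
  constructor
  · rintro ⟨hx, hn⟩
    rw [mem_A15plus_iff] at hx
    obtain ⟨⟨k, hk⟩, hs⟩ := hx
    choose m hm using hk
    set r := k % 4 with hrdef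
    set q := k / 4 with hqdef
    set d : Fin 16 → ℤ := fun i => m i + q with hd
    have hkr : 4 * q + r = k := by omega
    have hxi : ∀ i, x i = (d i : ℝ) + (r : ℝ) / 4 := by
      intro i
      rw [hm i]
      have : (k : ℝ) = 4 * q + r := by exact_mod_cast hkr.symm
      rw [this]
      push_cast [hd]
      ring
    -- sum equation
    have hs2 : (∑ i, (d i : ℝ)) + 16 * ((r : ℝ) / 4) = 0 := by
      have h0 : ∑ i : Fin 16, ((d i : ℝ) + (r : ℝ) / 4) = 0 := by
        rw [← hs]
        exact Finset.sum_congr rfl (fun i _ => (hxi i).symm)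
      rw [Finset.sum_add_distrib, Finset.sum_const, Finset.card_univ] at h0
      simpa using h0
    have h1 : ∑ i, d i = -4 * r := by
      have : (∑ i, (d i : ℝ)) = -4 * r := by linarith
      exact_mod_cast this
    -- norm equation
    have hn2 : ∑ i, x i * x i = 3 := by
      rw [PiLp.inner_apply] at hn
      simpa [RCLike.inner_apply, pow_two] using hn
    have hn3 : (∑ i, ((d i : ℝ))^2) + (r : ℝ)/2 * (∑ i, (d i : ℝ))
        + 16 * ((r : ℝ)^2/16) = 3 := by
      have h0 : ∑ i : Fin 16, (((d i : ℝ))^2 + (r : ℝ)/2 * (d i) + (r : ℝ)^2/16) = 3 := by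
        rw [← hn2]
        refine Finset.sum_congr rfl (fun i _ => ?_)
        rw [hxi i]; ring
      rw [Finset.sum_add_distrib, Finset.sum_add_distrib, ← Finset.mul_sum,
        Finset.sum_const, Finset.card_univ] at h0
      simpa using h0
    have h2 : ∑ i, (d i)^2 = 3 + r^2 := by
      have hds : (∑ i, (d i : ℝ)) = -4 * r := by exact_mod_cast h1
      rw [hds] at hn3
      have : (∑ i, ((d i : ℝ))^2) = 3 + (r:ℝ)^2 := by ring_nf at hn3 ⊢; linarith
      exact_mod_cast this
    have hr0 : 0 ≤ r := Int.emod_nonneg k (by norm_num)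
    have hr4 : r < 4 := Int.emod_lt_of_pos k (by norm_num)
    interval_cases r
    · -- r = 0 : contradiction
      exfalso
      have hdvd : (2:ℤ) ∣ ∑ i, ((d i)^2 - d i) := by
        refine Finset.dvd_sum (fun i _ => ?_)
        obtain ⟨t, ht⟩ := Int.even_mul_succ_self (d i - 1)
        exact ⟨t, by linear_combination ht⟩
      rw [Finset.sum_sub_distrib, h1, h2] at hdvd
      omega
    · -- r = 1 : x = tVec I
      have hz : ∑ i, ((d i)^2 + d i) = 0 := by
        rw [Finset.sum_add_distrib, h1, h2]; ring
      have heach := (Finset.sum_eq_zero_iff_of_nonneg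
        (fun i _ => aux_nonneg (d i))).mp hz
      have hval : ∀ i, d i = 0 ∨ d i = -1 := by
        intro i
        have h := heach i (Finset.mem_univ i)
        have h' : d i * (d i + 1) = 0 := by linear_combination h
        rcases mul_eq_zero.mp h' with h'' | h''
        · exact Or.inl h''
        · exact Or.inr (by omega)
      set I := Finset.univ.filter (fun i => d i = -1) with hI
      have hdI : ∀ i, d i = if i ∈ I then -1 else 0 := by
        intro i
        by_cases h : i ∈ I
        · simpa [h] using (Finset.mem_filter.mp h).2
        · have : d i ≠ -1 := fun hc => h (Finset.mem_filter.mpr ⟨Finset.mem_univ i, hc⟩)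
          simp [h]
          rcases hval i with h' | h'
          · exact h'
          · exact absurd h' this
      have hsum : ∑ i, d i = -(I.card : ℤ) := by
        rw [Finset.sum_congr rfl (fun i _ => hdI i), Finset.sum_ite_mem, Finset.univ_inter,
          Finset.sum_const]
        simp
      have hcard : I.card = 4 := by
        have : (I.card : ℤ) = 4 := by omega
        exact_mod_cast this
      refine ⟨I, hcard, Or.inl ?_⟩
      ext j
      rw [hxi j, tVec_apply, hdI j]
      push_cast
      split <;> norm_num
    · -- r = 2 : contradiction
      exfalso
      have hz : ∑ i, ((d i)^2 + d i) = -1 := by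
        rw [Finset.sum_add_distrib, h1, h2]; ring
      have := Finset.sum_nonneg (fun i (_ : i ∈ Finset.univ) => aux_nonneg (d i))
      omega
    · -- r = 3 : x = -tVec I
      have hz : ∑ i, ((d i)^2 + d i) = 0 := by
        rw [Finset.sum_add_distrib, h1, h2]; ring
      have heach := (Finset.sum_eq_zero_iff_of_nonneg
        (fun i _ => aux_nonneg (d i))).mp hz
      have hval : ∀ i, d i = 0 ∨ d i = -1 := by
        intro i
        have h := heach i (Finset.mem_univ i)
        have h' : d i * (d i + 1) = 0 := by linear_combination h
        rcases mul_eq_zero.mp h' with h'' | h''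
        · exact Or.inl h''
        · exact Or.inr (by omega)
      set I := Finset.univ.filter (fun i => d i = 0) with hI
      have hdI : ∀ i, d i = (if i ∈ I then 1 else 0) - 1 := by
        intro i
        by_cases h : i ∈ I
        · simpa [h] using (Finset.mem_filter.mp h).2
        · have : d i ≠ 0 := fun hc => h (Finset.mem_filter.mpr ⟨Finset.mem_univ i, hc⟩)
          simp [h]
          rcases hval i with h' | h'
          · exact absurd h' this
          · exact h'
      have hsum : ∑ i, d i = (I.card : ℤ) - 16 := by
        rw [Finset.sum_congr rfl (fun i _ => hdI i), Finset.sum_sub_distrib,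
          Finset.sum_ite_mem, Finset.univ_inter, Finset.sum_const, Finset.sum_const,
          Finset.card_univ]
        simp
      have hcard : I.card = 4 := by
        have : (I.card : ℤ) = 4 := by omega
        exact_mod_cast this
      refine ⟨I, hcard, Or.inr ?_⟩
      ext j
      rw [hxi j]
      have hneg : (-tVec I) j = -(tVec I j) := rfl
      rw [hneg, tVec_apply, hdI j]
      push_cast
      split <;> norm_num
  · rintro ⟨I, hcard, hx | hx⟩ <;> subst hx
    · exact ⟨tVec_mem I hcard, inner_tVec I hcard⟩
    · refine ⟨Submodule.neg_mem _ (tVec_mem I hcard), ?_⟩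
      rw [inner_neg_neg]
      exact inner_tVec I hcard
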